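/- Let S³ = {s ∈ ℍ : |s| = 1} be the group of unit quaternions, and consider the action of T³ on S³ × S³ given by (t₁,t₂,t₃)·(s₁,s₂) = (t₁·s₁·t₃, t₂·s₂·t₃), where t₁,t₂,t₃ are complex numbers of modulus 1 acting via the standard inclusion ℂ ⊂ ℍ. Then the orbit space (S³ × S³)/T³ is homeomorphic to S³. -/

import Mathlib

/-- The standard inclusion ℂ ⊂ ℍ : `z = a + b·i ↦ a + b·i ∈ ℍ`. -/
noncomputable def toQ (z : ℂ) : Quaternion ℝ := ⟨z.re, z.im, 0, 0⟩

/-- The group `S³` of unit quaternions. -/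
abbrev S3 : Type := {s : Quaternion ℝ // ‖s‖ = 1}

/-- `(s₁,s₂) ~ (t₁ s₁ t₃, t₂ s₂ t₃)` for unit complex numbers `t₁,t₂,t₃`. -/
def rel15 (x y : S3 × S3) : Prop :=
  ∃ t₁ t₂ t₃ : ℂ, ‖t₁‖ = 1 ∧ ‖t₂‖ = 1 ∧ ‖t₃‖ = 1 ∧
    y.1.1 = toQ t₁ * x.1.1 * toQ t₃ ∧ y.2.1 = toQ t₂ * x.2.1 * toQ t₃

local notation "conj'" => (starRingEnd ℂ)

noncomputable def Aq (s : Quaternion ℝ) : ℂ := ⟨s.re, s.imI⟩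
noncomputable def Bq (s : Quaternion ℝ) : ℂ := ⟨s.imJ, s.imK⟩
noncomputable def mkQ (a b : ℂ) : Quaternion ℝ := ⟨a.re, a.im, b.re, b.im⟩

@[simp] lemma Aq_mkQ (a b : ℂ) : Aq (mkQ a b) = a := rfl
@[simp] lemma Bq_mkQ (a b : ℂ) : Bq (mkQ a b) = b := rfl
lemma mkQ_AB (s : Quaternion ℝ) : mkQ (Aq s) (Bq s) = s := rfl

lemma AB_ext {s t : Quaternion ℝ} (hA : Aq s = Aq t) (hB : Bq s = Bq t) : s = t := by
  rw [← mkQ_AB s, ← mkQ_AB t, hA, hB]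

-- invariants
noncomputable def xI (s : Quaternion ℝ) : ℝ := Complex.normSq (Aq s) - Complex.normSq (Bq s)
noncomputable def pI (s t : Quaternion ℝ) : ℂ :=
  Aq s * conj' (Bq s) * conj' (Aq t) * Bq t
noncomputable def Lf (s t : Quaternion ℝ) : ℝ := Real.sqrt (1 + (xI s * xI t)^2)

noncomputable def Fmap (z : S3 × S3) : EuclideanSpace ℝ (Fin 4) :=
  (WithLp.equiv 2 (Fin 4 → ℝ)).symm
    ![xI z.1.1 / Lf z.1.1 z.2.1, xI z.2.1 / Lf z.1.1 z.2.1,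
      4 * (pI z.1.1 z.2.1).re / Lf z.1.1 z.2.1, 4 * (pI z.1.1 z.2.1).im / Lf z.1.1 z.2.1]

lemma Lf_pos (s t : Quaternion ℝ) : 0 < Lf s t :=
  Real.sqrt_pos.2 (by positivity)

lemma Lf_sq (s t : Quaternion ℝ) : (Lf s t)^2 = 1 + (xI s * xI t)^2 :=
  Real.sq_sqrt (by positivity)

lemma normSq_AB (s : Quaternion ℝ) :
    Complex.normSq (Aq s) + Complex.normSq (Bq s) = ‖s‖ * ‖s‖ := by
  rw [← Quaternion.normSq_eq_norm_mul_self, Quaternion.normSq_def']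
  simp [Aq, Bq, Complex.normSq_apply]; ring

lemma normSq_pI (s t : Quaternion ℝ) (hs : ‖s‖ = 1) (ht : ‖t‖ = 1) :
    16 * Complex.normSq (pI s t) = (1 - (xI s)^2) * (1 - (xI t)^2) := by
  have h1 := normSq_AB s; have h2 := normSq_AB t
  rw [hs] at h1; rw [ht] at h2
  simp only [pI, map_mul, Complex.normSq_conj, xI]
  set a := Complex.normSq (Aq s); set b := Complex.normSq (Bq s)
  set c := Complex.normSq (Aq t); set d := Complex.normSq (Bq t)
  have e1 : (1 - (a-b)^2) = 4*a*b := by linear_combination (-(a+b+1))*h1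
  have e2 : (1 - (c-d)^2) = 4*c*d := by linear_combination (-(c+d+1))*h2
  rw [e1, e2]; ring

lemma xI_sq_le (s : Quaternion ℝ) (hs : ‖s‖ = 1) : (xI s)^2 ≤ 1 := by
  have h1 := normSq_AB s; rw [hs] at h1
  have h2 := Complex.normSq_nonneg (Aq s)
  have h3 := Complex.normSq_nonneg (Bq s)
  simp only [xI]; nlinarith

lemma Fmap_norm (z : S3 × S3) : ‖Fmap z‖ = 1 := by
  obtain ⟨⟨s, hs⟩, ⟨t, ht⟩⟩ := z
  have hp := normSq_pI s t hs ht
  have hL := Lf_sq s t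
  have hLpos := Lf_pos s t
  have hre : Complex.normSq (pI s t) = (pI s t).re^2 + (pI s t).im^2 := by
    simp [Complex.normSq_apply]; ring
  rw [Fmap, EuclideanSpace.norm_eq, Real.sqrt_eq_one]
  simp only [WithLp.equiv_symm_apply, PiLp.toLp_apply, Fin.sum_univ_four, Matrix.cons_val_zero,
    Matrix.cons_val_one, Matrix.head_cons, Matrix.cons_val_two, Matrix.tail_cons,
    Matrix.cons_val_three, Real.norm_eq_abs, sq_abs]
  field_simp
  nlinarith [hp, hL, hre, Lf_pos s t]

lemma Aq_mul (u v : ℂ) (s : Quaternion ℝ) :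
    Aq (toQ u * s * toQ v) = u * v * Aq s := by
  apply Complex.ext <;>
  simp [Aq, Quaternion.re_mul, Quaternion.imI_mul, Quaternion.imJ_mul, Quaternion.imK_mul,
    Complex.mul_re, Complex.mul_im] <;> simp [toQ] <;> ring

lemma Bq_mul (u v : ℂ) (s : Quaternion ℝ) :
    Bq (toQ u * s * toQ v) = u * conj' v * Bq s := by
  apply Complex.ext <;>
  simp [Bq, Quaternion.re_mul, Quaternion.imI_mul, Quaternion.imJ_mul, Quaternion.imK_mul,
    Complex.mul_re, Complex.mul_im] <;> simp [toQ] <;> ring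

lemma norm_one_normSq {u : ℂ} (h : ‖u‖ = 1) : Complex.normSq u = 1 := by
  simp [Complex.normSq_eq_norm_sq, h]

lemma normSq_one_norm {u : ℂ} (h : Complex.normSq u = 1) : ‖u‖ = 1 := by
  have h1 : ‖u‖^2 = 1 := by rw [← Complex.sq_norm] at h; exact_mod_cast h
  nlinarith [norm_nonneg u]

lemma xI_mul (u v : ℂ) (hu : ‖u‖ = 1) (hv : ‖v‖ = 1) (s : Quaternion ℝ) :
    xI (toQ u * s * toQ v) = xI s := by
  have hu' := norm_one_normSq hu; have hv' := norm_one_normSq hv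
  simp [xI, Aq_mul, Bq_mul, map_mul, Complex.normSq_conj, hu', hv']

lemma pI_mul (u w v : ℂ) (hu : ‖u‖ = 1) (hw : ‖w‖ = 1) (hv : ‖v‖ = 1) (s t : Quaternion ℝ) :
    pI (toQ u * s * toQ v) (toQ w * t * toQ v) = pI s t := by
  have hu' := norm_one_normSq hu; have hv' := norm_one_normSq hv
  have hw' := norm_one_normSq hw
  have h1 : u * conj' u = 1 := by rw [Complex.mul_conj]; exact_mod_cast hu'
  have h2 : v * conj' v = 1 := by rw [Complex.mul_conj]; exact_mod_cast hv'
  have h3 : w * conj' w = 1 := by rw [Complex.mul_conj]; exact_mod_cast hw'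
  simp only [pI, Aq_mul, Bq_mul, map_mul, Complex.conj_conj]
  have key : (u*v*Aq s) * (conj' u * v * conj' (Bq s)) *
      (conj' w * conj' v * conj' (Aq t)) * (w * conj' v * Bq t)
      = (u * conj' u) * (w * conj' w) * (v * conj' v)^2 *
        (Aq s * conj' (Bq s) * conj' (Aq t) * Bq t) := by ring
  rw [key, h1, h2, h3]; ring

lemma Fmap_rel {z w : S3 × S3} (h : rel15 z w) : Fmap z = Fmap w := by
  obtain ⟨t₁, t₂, t₃, h1, h2, h3, e1, e2⟩ := h
  have hx1 : xI w.1.1 = xI z.1.1 := by rw [e1, xI_mul t₁ t₃ h1 h3]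
  have hx2 : xI w.2.1 = xI z.2.1 := by rw [e2, xI_mul t₂ t₃ h2 h3]
  have hpp : pI w.1.1 w.2.1 = pI z.1.1 z.2.1 := by rw [e1, e2, pI_mul t₁ t₂ t₃ h1 h2 h3]
  simp [Fmap, Lf, hx1, hx2, hpp]

lemma Aq_eq (s : Quaternion ℝ) : Aq s = (s.re : ℂ) + (s.imI : ℂ) * Complex.I := by
  apply Complex.ext <;> simp [Aq]

lemma Bq_eq (s : Quaternion ℝ) : Bq s = (s.imJ : ℂ) + (s.imK : ℂ) * Complex.I := by
  apply Complex.ext <;> simp [Bq]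

lemma continuous_Aq : Continuous Aq := by
  rw [funext Aq_eq]
  exact (Complex.continuous_ofReal.comp Quaternion.continuous_re).add
    ((Complex.continuous_ofReal.comp Quaternion.continuous_imI).mul continuous_const)

lemma continuous_Bq : Continuous Bq := by
  rw [funext Bq_eq]
  exact (Complex.continuous_ofReal.comp Quaternion.continuous_imJ).add
    ((Complex.continuous_ofReal.comp Quaternion.continuous_imK).mul continuous_const)

lemma continuous_xI : Continuous xI :=
  (Complex.continuous_normSq.comp continuous_Aq).sub (Complex.continuous_normSq.comp continuous_Bq)

lemma continuous_pI : Continuous (fun z : Quaternion ℝ × Quaternion ℝ => pI z.1 z.2) := by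
  apply Continuous.mul
  apply Continuous.mul
  apply Continuous.mul
  · exact continuous_Aq.comp continuous_fst
  · exact Complex.continuous_conj.comp (continuous_Bq.comp continuous_fst)
  · exact Complex.continuous_conj.comp (continuous_Aq.comp continuous_snd)
  · exact continuous_Bq.comp continuous_snd

lemma continuous_Fmap : Continuous Fmap := by
  have hx1 : Continuous (fun z : S3 × S3 => xI z.1.1) :=
    continuous_xI.comp (continuous_subtype_val.comp continuous_fst)
  have hx2 : Continuous (fun z : S3 × S3 => xI z.2.1) :=
    continuous_xI.comp (continuous_subtype_val.comp continuous_snd)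
  have hpc : Continuous (fun z : S3 × S3 => pI z.1.1 z.2.1) :=
    continuous_pI.comp (X := S3 × S3) (f := fun z : S3 × S3 => (z.1.1, z.2.1)) ((continuous_subtype_val.comp continuous_fst).prodMk
      (continuous_subtype_val.comp continuous_snd))
  have hL : Continuous (fun z : S3 × S3 => Lf z.1.1 z.2.1) := by
    apply Real.continuous_sqrt.comp
    exact continuous_const.add (((hx1.mul hx2)).pow 2)
  have hLne : ∀ z : S3 × S3, Lf z.1.1 z.2.1 ≠ 0 := fun z => (Lf_pos _ _).ne'
  apply (PiLp.continuous_toLp 2 (fun _ : Fin 4 => ℝ)).comp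
  apply continuous_pi
  intro i
  fin_cases i <;> simp
  · exact (hx1.div hL hLne)
  · exact (hx2.div hL hLne)
  · exact ((continuous_const.mul (Complex.continuous_re.comp hpc)).div hL hLne)
  · exact ((continuous_const.mul (Complex.continuous_im.comp hpc)).div hL hLne)

lemma phase (c c' : ℂ) (h : Complex.normSq c = Complex.normSq c') :
    ∃ u : ℂ, Complex.normSq u = 1 ∧ c' = u * c := by
  by_cases hc : c = 0
  · refine ⟨1, by simp, ?_⟩
    have : Complex.normSq c' = 0 := by rw [← h, hc]; simp
    simp [hc, Complex.normSq_eq_zero.mp this]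
  · refine ⟨c' * c⁻¹, ?_, by field_simp⟩
    rw [Complex.normSq_mul, Complex.normSq_inv, ← h]
    field_simp [Complex.normSq_eq_zero, hc]

lemma sqrt_unit {u : ℂ} (hu : Complex.normSq u = 1) :
    ∃ t : ℂ, Complex.normSq t = 1 ∧ t^2 = u := by
  obtain ⟨t, ht⟩ := IsAlgClosed.exists_pow_nat_eq u (n := 2) (by norm_num)
  refine ⟨t, ?_, ht⟩
  have h2 : Complex.normSq t ^ 2 = 1 := by rw [← map_pow, ht, hu]
  nlinarith [Complex.normSq_nonneg t, h2]

lemma exists_t (a₁ b₁ a₂ b₂ a₁' b₁' a₂' b₂' : ℂ)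
    (h1 : Complex.normSq a₁ = Complex.normSq a₁') (h2 : Complex.normSq b₁ = Complex.normSq b₁')
    (h3 : Complex.normSq a₂ = Complex.normSq a₂') (h4 : Complex.normSq b₂ = Complex.normSq b₂')
    (hp : a₁ * conj' b₁ * conj' a₂ * b₂ = a₁' * conj' b₁' * conj' a₂' * b₂') :
    ∃ t₁ t₂ t₃ : ℂ, Complex.normSq t₁ = 1 ∧ Complex.normSq t₂ = 1 ∧ Complex.normSq t₃ = 1 ∧
      a₁' = t₁ * t₃ * a₁ ∧ b₁' = t₁ * conj' t₃ * b₁ ∧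
      a₂' = t₂ * t₃ * a₂ ∧ b₂' = t₂ * conj' t₃ * b₂ := by
  obtain ⟨α, hα, eα⟩ := phase a₁ a₁' h1
  obtain ⟨β, hβ, eβ⟩ := phase b₁ b₁' h2
  obtain ⟨γ, hγ, eγ⟩ := phase a₂ a₂' h3
  obtain ⟨δ, hδ, eδ⟩ := phase b₂ b₂' h4
  obtain ⟨α, β, γ, δ, hα, hβ, hγ, hδ, eα, eβ, eγ, eδ, hrel⟩ :
      ∃ α β γ δ : ℂ, Complex.normSq α = 1 ∧ Complex.normSq β = 1 ∧ Complex.normSq γ = 1 ∧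
        Complex.normSq δ = 1 ∧
        a₁' = α * a₁ ∧ b₁' = β * b₁ ∧ a₂' = γ * a₂ ∧ b₂' = δ * b₂ ∧ α * δ = β * γ := by
    by_cases ha₁ : a₁ = 0
    · refine ⟨β * γ * conj' δ, β, γ, δ, by simp [Complex.normSq_conj, hβ, hγ, hδ],
        hβ, hγ, hδ, by simp [eα, ha₁], eβ, eγ, eδ, ?_⟩
      have hδ1 : δ * conj' δ = 1 := by rw [Complex.mul_conj]; exact_mod_cast hδ
      linear_combination β * γ * hδ1
    by_cases hb₁ : b₁ = 0
    · refine ⟨α, α * δ * conj' γ, γ, δ, hα, by simp [Complex.normSq_conj, hα, hγ, hδ],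
        hγ, hδ, eα, by simp [eβ, hb₁], eγ, eδ, ?_⟩
      have hγ1 : γ * conj' γ = 1 := by rw [Complex.mul_conj]; exact_mod_cast hγ
      linear_combination (-(α * δ)) * hγ1
    by_cases ha₂ : a₂ = 0
    · refine ⟨α, β, α * δ * conj' β, δ, hα, hβ, by simp [Complex.normSq_conj, hα, hβ, hδ],
        hδ, eα, eβ, by simp [eγ, ha₂], eδ, ?_⟩
      have hβ1 : β * conj' β = 1 := by rw [Complex.mul_conj]; exact_mod_cast hβ
      linear_combination (-(α * δ)) * hβ1
    by_cases hb₂ : b₂ = 0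
    · refine ⟨α, β, γ, β * γ * conj' α, hα, hβ, hγ, by simp [Complex.normSq_conj, hα, hβ, hγ],
        eα, eβ, eγ, by simp [eδ, hb₂], ?_⟩
      have hα1 : α * conj' α = 1 := by rw [Complex.mul_conj]; exact_mod_cast hα
      linear_combination β * γ * hα1
    · refine ⟨α, β, γ, δ, hα, hβ, hγ, hδ, eα, eβ, eγ, eδ, ?_⟩
      rw [eα, eβ, eγ, eδ] at hp
      simp only [map_mul] at hp
      have hprod : a₁ * conj' b₁ * conj' a₂ * b₂ ≠ 0 := by
        simp [ha₁, hb₁, ha₂, hb₂]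
      have key : (α * δ) * (conj' β * conj' γ) * (a₁ * conj' b₁ * conj' a₂ * b₂)
          = a₁ * conj' b₁ * conj' a₂ * b₂ := by linear_combination -hp
      have h2 : (α * δ) * (conj' β * conj' γ) = 1 :=
        mul_right_cancel₀ hprod (key.trans (one_mul _).symm)
      have hβ1 : β * conj' β = 1 := by rw [Complex.mul_conj]; exact_mod_cast hβ
      have hγ1 : γ * conj' γ = 1 := by rw [Complex.mul_conj]; exact_mod_cast hγ
      have hβγ : conj' β * conj' γ * (β * γ) = 1 := by
        linear_combination (conj' γ * γ) * hβ1 + hγ1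
      linear_combination (β * γ) * h2 - (α * δ) * hβγ
  obtain ⟨t₃, ht₃, ht₃sq⟩ := sqrt_unit (u := α * conj' β) (by simp [Complex.normSq_conj, hα, hβ])
  have h3c : t₃ * conj' t₃ = 1 := by rw [Complex.mul_conj]; exact_mod_cast ht₃
  have hαc : α * conj' α = 1 := by rw [Complex.mul_conj]; exact_mod_cast hα
  have hconjsq : (conj' t₃)^2 = conj' α * β := by
    have := congrArg conj' ht₃sq
    simp only [map_mul, map_pow, Complex.conj_conj] at this
    rw [this]
  refine ⟨α * conj' t₃, γ * conj' t₃, t₃, by simp [Complex.normSq_conj, hα, ht₃],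
    by simp [Complex.normSq_conj, hγ, ht₃], ht₃, ?_, ?_, ?_, ?_⟩
  · rw [eα]; linear_combination (-(a₁ * α)) * h3c
  · rw [eβ]; linear_combination (-(α * b₁)) * hconjsq - (β * b₁) * hαc
  · rw [eγ]; linear_combination (-(a₂ * γ)) * h3c
  · rw [eδ]
    have hthis : γ * conj' α * β = δ := by
      calc γ * conj' α * β = β * γ * conj' α := by ring
      _ = α * δ * conj' α := by rw [hrel]
      _ = δ * (α * conj' α) := by ring
      _ = δ := by rw [hαc, mul_one]
    linear_combination (-(γ * b₂)) * hconjsq + (-b₂) * hthis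

lemma ratio_inj {x y x' y' : ℝ} (hx : x^2 ≤ 1) (hy : y^2 ≤ 1) (hx' : x'^2 ≤ 1) (hy' : y'^2 ≤ 1)
    (h1 : x / Real.sqrt (1 + (x*y)^2) = x' / Real.sqrt (1 + (x'*y')^2))
    (h2 : y / Real.sqrt (1 + (x*y)^2) = y' / Real.sqrt (1 + (x'*y')^2)) :
    x = x' ∧ y = y' := by
  set L := Real.sqrt (1 + (x*y)^2) with hL
  set L' := Real.sqrt (1 + (x'*y')^2) with hL'
  have hLpos : 0 < L := Real.sqrt_pos.2 (by positivity)
  have hL'pos : 0 < L' := Real.sqrt_pos.2 (by positivity)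
  have hLsq : L^2 = 1 + (x*y)^2 := Real.sq_sqrt (by positivity)
  have hL'sq : L'^2 = 1 + (x'*y')^2 := Real.sq_sqrt (by positivity)
  have e1 : x * L' = x' * L := by
    field_simp at h1; linarith [h1]
  have e2 : y * L' = y' * L := by
    field_simp at h2; linarith [h2]
  have key : (x*y)^2 = (x'*y')^2 := by
    have p1 : (x*y)^2 * (L'^2)^2 = (x'*y')^2 * (L^2)^2 := by
      have := congrArg (fun t => t^2) (congrArg₂ (· * ·) e1 e2)
      linear_combination this
    set a := (x*y)^2; set a' := (x'*y')^2
    have ha : 0 ≤ a := sq_nonneg _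
    have ha' : 0 ≤ a' := sq_nonneg _
    have ha1 : a ≤ 1 := by
      have h := mul_le_mul hx hy (sq_nonneg y) zero_le_one
      calc a = x^2 * y^2 := by ring
        _ ≤ 1 * 1 := h
        _ = 1 := by norm_num
    have ha1' : a' ≤ 1 := by
      have h := mul_le_mul hx' hy' (sq_nonneg y') zero_le_one
      calc a' = x'^2 * y'^2 := by ring
        _ ≤ 1 * 1 := h
        _ = 1 := by norm_num
    rw [hLsq, hL'sq] at p1
    have hfac : (a - a') * (1 - a * a') = 0 := by linear_combination p1
    rcases mul_eq_zero.mp hfac with h | h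
    · linarith
    · have haa : a * a' = 1 := by linarith
      have k1 : a = 1 := le_antisymm ha1 (by nlinarith)
      have k2 : a' = 1 := le_antisymm ha1' (by nlinarith)
      rw [k1, k2]
  have hLL : L = L' := by rw [hL, hL', key]
  constructor
  · have := e1; rw [hLL] at this; exact mul_right_cancel₀ hL'pos.ne' this
  · have := e2; rw [hLL] at this; exact mul_right_cancel₀ hL'pos.ne' this

lemma Fmap_inj {z w : S3 × S3} (h : Fmap z = Fmap w) : rel15 z w := by
  obtain ⟨⟨s, hs⟩, ⟨t, ht⟩⟩ := z
  obtain ⟨⟨s', hs'⟩, ⟨t', ht'⟩⟩ := w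
  have h0 := congrArg (fun v => v 0) h
  have h1 := congrArg (fun v => v 1) h
  have h2 := congrArg (fun v => v 2) h
  have h3 := congrArg (fun v => v 3) h
  simp only [Fmap, WithLp.equiv_symm_apply, PiLp.toLp_apply, Matrix.cons_val_zero, Matrix.cons_val_one,
    Matrix.head_cons, Matrix.cons_val_two, Matrix.tail_cons, Matrix.cons_val_three] at h0 h1 h2 h3
  have hxx := ratio_inj (xI_sq_le s hs) (xI_sq_le t ht) (xI_sq_le s' hs') (xI_sq_le t' ht')
    (by exact h0) (by exact h1)
  obtain ⟨hx1, hx2⟩ := hxx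
  have hLL : Lf s t = Lf s' t' := by rw [Lf, Lf, hx1, hx2]
  have hLne : Lf s' t' ≠ 0 := (Lf_pos _ _).ne'
  rw [hLL] at h2 h3
  have hre : (pI s t).re = (pI s' t').re := by
    field_simp at h2; linarith
  have him : (pI s t).im = (pI s' t').im := by
    field_simp at h3; linarith
  have hpp : pI s t = pI s' t' := Complex.ext hre him
  -- normSq equalities
  have hA1 := normSq_AB s; rw [hs] at hA1
  have hA1' := normSq_AB s'; rw [hs'] at hA1'
  have hA2 := normSq_AB t; rw [ht] at hA2
  have hA2' := normSq_AB t'; rw [ht'] at hA2'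
  have hxs : Complex.normSq (Aq s) - Complex.normSq (Bq s)
      = Complex.normSq (Aq s') - Complex.normSq (Bq s') := hx1
  have hxt : Complex.normSq (Aq t) - Complex.normSq (Bq t)
      = Complex.normSq (Aq t') - Complex.normSq (Bq t') := hx2
  have n1 : Complex.normSq (Aq s) = Complex.normSq (Aq s') := by linarith
  have n2 : Complex.normSq (Bq s) = Complex.normSq (Bq s') := by linarith
  have n3 : Complex.normSq (Aq t) = Complex.normSq (Aq t') := by linarith
  have n4 : Complex.normSq (Bq t) = Complex.normSq (Bq t') := by linarith
  obtain ⟨t₁, t₂, t₃, u1, u2, u3, e1, e2, e3, e4⟩ :=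
    exists_t (Aq s) (Bq s) (Aq t) (Bq t) (Aq s') (Bq s') (Aq t') (Bq t') n1 n2 n3 n4 hpp
  refine ⟨t₁, t₂, t₃, normSq_one_norm u1, normSq_one_norm u2, normSq_one_norm u3, ?_, ?_⟩
  · exact AB_ext (by rw [Aq_mul]; exact e1) (by rw [Bq_mul]; exact e2)
  · exact AB_ext (by rw [Aq_mul]; exact e3) (by rw [Bq_mul]; exact e4)

lemma norm_mkQ {a b : ℂ} (h : Complex.normSq a + Complex.normSq b = 1) : ‖mkQ a b‖ = 1 := by
  have h2 := normSq_AB (mkQ a b)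
  rw [Aq_mkQ, Bq_mkQ, h] at h2
  nlinarith [norm_nonneg (mkQ a b)]


lemma surj_core (X Y P1 P2 : ℝ) (hsum : X^2 + Y^2 + P1^2 + P2^2 = 1) :
    ∃ lam : ℝ, 0 < lam ∧ (lam*X)^2 ≤ 1 ∧ (lam*Y)^2 ≤ 1 ∧
      Real.sqrt (1 + ((lam*X)*(lam*Y))^2) = lam ∧
      16 * ((lam*P1/4)*(lam*P1/4) + (lam*P2/4)*(lam*P2/4))
        = (1-(lam*X)^2)*(1-(lam*Y)^2) := by
  have h4 : 4*X^2*Y^2 ≤ 1 := by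
    nlinarith [sq_nonneg (X^2 - Y^2), sq_nonneg P1, sq_nonneg P2, sq_nonneg (X^2+Y^2)]
  set D := Real.sqrt (1 - 4*X^2*Y^2) with hDdef
  have hD0 : 0 ≤ D := Real.sqrt_nonneg _
  have hD2 : D^2 = 1 - 4*X^2*Y^2 := Real.sq_sqrt (by linarith)
  have hD1 : D ≤ 1 := by nlinarith [sq_nonneg X, sq_nonneg Y, sq_nonneg (X*Y)]
  have hDpos : (0:ℝ) < 1 + D := by linarith
  set tt := 2/(1+D) with httdef
  have e : tt*(1+D) = 2 := div_mul_cancel₀ 2 hDpos.ne'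
  have ht1 : 1 ≤ tt := by rw [httdef, le_div_iff₀ hDpos]; linarith
  have htpos : 0 < tt := lt_of_lt_of_le one_pos ht1
  have hz : (tt - 1 - tt^2*X^2*Y^2)*(1+D)^2 = 0 := by
    linear_combination ((1+D) - X^2*Y^2*(tt*(1+D)+2)) * e - hD2
  have key1 : tt = 1 + tt^2*X^2*Y^2 := by
    rcases mul_eq_zero.mp hz with h | h
    · linarith
    · exact absurd h (by positivity)
  have h2X : 2*X^2 ≤ 1 + D := by nlinarith [sq_nonneg P1, sq_nonneg P2, mul_nonneg hD0 (sq_nonneg X)]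
  have h2Y : 2*Y^2 ≤ 1 + D := by nlinarith [sq_nonneg P1, sq_nonneg P2, mul_nonneg hD0 (sq_nonneg Y)]
  refine ⟨Real.sqrt tt, Real.sqrt_pos.2 htpos, ?_, ?_, ?_, ?_⟩
  · rw [mul_pow, Real.sq_sqrt htpos.le, httdef, div_mul_eq_mul_div, div_le_one hDpos]; linarith
  · rw [mul_pow, Real.sq_sqrt htpos.le, httdef, div_mul_eq_mul_div, div_le_one hDpos]; linarith
  · have hxy : 1 + ((Real.sqrt tt*X)*(Real.sqrt tt*Y))^2 = tt := by
      have h1 : ((Real.sqrt tt*X)*(Real.sqrt tt*Y))^2 = (Real.sqrt tt^2)^2*(X^2*Y^2) := by ring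
      rw [h1, Real.sq_sqrt htpos.le]; linear_combination -key1
    rw [hxy]
  · have hP : P1^2 + P2^2 = 1 - X^2 - Y^2 := by linarith
    have h1 : 16 * ((Real.sqrt tt*P1/4)*(Real.sqrt tt*P1/4) + (Real.sqrt tt*P2/4)*(Real.sqrt tt*P2/4))
        = Real.sqrt tt^2 * (P1^2+P2^2) := by ring
    rw [h1, Real.sq_sqrt htpos.le, hP]
    have h2 : (1-(Real.sqrt tt*X)^2)*(1-(Real.sqrt tt*Y)^2)
        = 1 - Real.sqrt tt^2*X^2 - Real.sqrt tt^2*Y^2 + (Real.sqrt tt^2)^2*(X^2*Y^2) := by ring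
    rw [h2, Real.sq_sqrt htpos.le]
    linear_combination key1

lemma sq_le_one_bounds {x : ℝ} (h : x^2 ≤ 1) : -1 ≤ x ∧ x ≤ 1 :=
  ⟨by nlinarith [sq_nonneg (x+1)], by nlinarith [sq_nonneg (x-1)]⟩

set_option maxHeartbeats 1000000 in
lemma Fmap_surj (v : EuclideanSpace ℝ (Fin 4)) (hv : ‖v‖ = 1) : ∃ z : S3 × S3, Fmap z = v := by
  set X := v 0 with hX
  set Y := v 1 with hY
  set P1 := v 2 with hP1
  set P2 := v 3 with hP2
  have hsum : X^2 + Y^2 + P1^2 + P2^2 = 1 := by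
    rw [EuclideanSpace.norm_eq, Real.sqrt_eq_one] at hv
    simpa [Fin.sum_univ_four, Real.norm_eq_abs, sq_abs] using hv
  obtain ⟨lam, hlampos, hx2, hy2, hlamL, hp16'⟩ := surj_core X Y P1 P2 hsum
  set x := lam*X with hxdef
  set y := lam*Y with hydef
  obtain ⟨hxm, hxp⟩ := sq_le_one_bounds hx2
  obtain ⟨hym, hyp⟩ := sq_le_one_bounds hy2
  set p : ℂ := ⟨lam*P1/4, lam*P2/4⟩ with hpdef
  have hp16 : 16 * Complex.normSq p = (1-x^2)*(1-y^2) := by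
    rw [hpdef, Complex.normSq_mk]; exact hp16'
  set A1 := Real.sqrt ((1+x)/2) with hA1def
  set B1 := Real.sqrt ((1-x)/2) with hB1def
  set A2 := Real.sqrt ((1+y)/2) with hA2def
  have hA1sq : A1^2 = (1+x)/2 := Real.sq_sqrt (by linarith)
  have hB1sq : B1^2 = (1-x)/2 := Real.sq_sqrt (by linarith)
  have hA2sq : A2^2 = (1+y)/2 := Real.sq_sqrt (by linarith)
  set B2 : ℂ := if (A1*B1*A2 : ℝ) = 0 then ((Real.sqrt ((1-y)/2) : ℝ) : ℂ)
    else p / ((A1*B1*A2 : ℝ) : ℂ) with hB2def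
  have hpzero : (A1*B1*A2 : ℝ) = 0 → p = 0 := by
    intro h0
    have hfac : (1-x^2)*(1-y^2) = 0 := by
      rcases mul_eq_zero.mp h0 with h | h
      · rcases mul_eq_zero.mp h with h | h
        · have h' := hA1sq; rw [h] at h'; norm_num at h'
          have hx1 : x = -1 := by linarith
          rw [hx1]; ring
        · have h' := hB1sq; rw [h] at h'; norm_num at h'
          have hx1 : x = 1 := by linarith
          rw [hx1]; ring
      · have h' := hA2sq; rw [h] at h'; norm_num at h'
        have hy1 : y = -1 := by linarith
        rw [hy1]; ring
    have : Complex.normSq p = 0 := by linarith [hp16, hfac]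
    exact Complex.normSq_eq_zero.mp this
  have hnB2 : Complex.normSq B2 = (1-y)/2 := by
    rw [hB2def]
    split_ifs with h0
    · rw [Complex.normSq_ofReal, ← sq, Real.sq_sqrt (by linarith)]
    · have hA1ne : A1 ≠ 0 := fun h => h0 (by rw [h]; ring)
      have hB1ne : B1 ≠ 0 := fun h => h0 (by rw [h]; ring)
      have hA2ne : A2 ≠ 0 := fun h => h0 (by rw [h]; ring)
      rw [Complex.normSq_div, Complex.normSq_ofReal]
      have hden : A1*B1*A2*(A1*B1*A2) = (1+x)/2 * ((1-x)/2) * ((1+y)/2) := by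
        have h' : A1*B1*A2*(A1*B1*A2) = A1^2*B1^2*A2^2 := by ring
        rw [h', hA1sq, hB1sq, hA2sq]
      have hdenpos : (0:ℝ) < (1+x)/2 * ((1-x)/2) * ((1+y)/2) := by
        rw [← hden]; exact mul_self_pos.mpr h0
      rw [hden, div_eq_iff hdenpos.ne']
      linear_combination (1/16) * hp16
  have hs1 : ‖mkQ (A1 : ℂ) (B1 : ℂ)‖ = 1 := by
    apply norm_mkQ
    rw [Complex.normSq_ofReal, Complex.normSq_ofReal, ← sq, ← sq, hA1sq, hB1sq]; ring
  have hs2 : ‖mkQ (A2 : ℂ) B2‖ = 1 := by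
    apply norm_mkQ
    rw [Complex.normSq_ofReal, ← sq, hA2sq, hnB2]; ring
  refine ⟨(⟨mkQ (A1:ℂ) (B1:ℂ), hs1⟩, ⟨mkQ (A2:ℂ) B2, hs2⟩), ?_⟩
  have hxI1 : xI (mkQ (A1:ℂ) (B1:ℂ)) = x := by
    rw [xI, Aq_mkQ, Bq_mkQ, Complex.normSq_ofReal, Complex.normSq_ofReal, ← sq, ← sq,
      hA1sq, hB1sq]; ring
  have hxI2 : xI (mkQ (A2:ℂ) B2) = y := by
    rw [xI, Aq_mkQ, Bq_mkQ, Complex.normSq_ofReal, ← sq, hA2sq, hnB2]; ring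
  have hpI : pI (mkQ (A1:ℂ) (B1:ℂ)) (mkQ (A2:ℂ) B2) = p := by
    rw [pI, Aq_mkQ, Bq_mkQ, Aq_mkQ, Bq_mkQ, Complex.conj_ofReal, Complex.conj_ofReal]
    by_cases h0 : (A1*B1*A2 : ℝ) = 0
    · rw [hpzero h0, hB2def, if_pos h0]
      have hc : (A1:ℂ)*(B1:ℂ)*(A2:ℂ) = ((A1*B1*A2 : ℝ) : ℂ) := by push_cast; ring
      calc (A1:ℂ)*(B1:ℂ)*(A2:ℂ)*((Real.sqrt ((1-y)/2) : ℝ) : ℂ)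
          = ((A1*B1*A2 : ℝ) : ℂ)*((Real.sqrt ((1-y)/2) : ℝ) : ℂ) := by rw [hc]
        _ = 0 := by rw [h0]; simp
    · rw [hB2def, if_neg h0]
      have hcast : ((A1*B1*A2 : ℝ) : ℂ) ≠ 0 := by exact_mod_cast h0
      have hc : (A1:ℂ)*(B1:ℂ)*(A2:ℂ) = ((A1*B1*A2 : ℝ) : ℂ) := by push_cast; ring
      rw [hc, mul_comm, div_mul_cancel₀ _ hcast]
  have hLfv : Lf (mkQ (A1:ℂ) (B1:ℂ)) (mkQ (A2:ℂ) B2) = lam := by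
    rw [Lf, hxI1, hxI2, hlamL]
  ext i
  fin_cases i
  · show xI (mkQ (A1:ℂ) (B1:ℂ)) / Lf _ _ = v 0
    rw [hxI1, hLfv, hxdef, ← hX, mul_div_cancel_left₀ _ hlampos.ne']
  · show xI (mkQ (A2:ℂ) B2) / Lf _ _ = v 1
    rw [hxI2, hLfv, hydef, ← hY, mul_div_cancel_left₀ _ hlampos.ne']
  · show 4 * (pI _ _).re / Lf _ _ = v 2
    rw [hpI, hLfv, hpdef, ← hP1]
    show 4 * (lam*P1/4) / lam = P1
    field_simp
  · show 4 * (pI _ _).im / Lf _ _ = v 3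
    rw [hpI, hLfv, hpdef, ← hP2]
    show 4 * (lam*P2/4) / lam = P2
    field_simp

instance : CompactSpace S3 := by
  have h : {s : Quaternion ℝ | ‖s‖ = 1} = Metric.sphere (0 : Quaternion ℝ) 1 := by
    ext s; simp [dist_eq_norm]
  have : IsCompact {s : Quaternion ℝ | ‖s‖ = 1} := by rw [h]; exact isCompact_sphere 0 1
  exact isCompact_iff_compactSpace.mp this

noncomputable def Gmap (z : S3 × S3) : Metric.sphere (0 : EuclideanSpace ℝ (Fin 4)) 1 :=
  ⟨Fmap z, mem_sphere_zero_iff_norm.mpr (Fmap_norm z)⟩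

noncomputable def GQ : Quot rel15 → Metric.sphere (0 : EuclideanSpace ℝ (Fin 4)) 1 :=
  Quot.lift Gmap (fun _ _ hab => Subtype.ext (Fmap_rel hab))

/-- `(S³ × S³)/T³ ≅ S³` for the action `(t₁,t₂,t₃)·(s₁,s₂) = (t₁s₁t₃, t₂s₂t₃)`. -/
theorem S3xS3_quotient_T3_homeomorphic_S3 :
    Nonempty (Quot rel15 ≃ₜ Metric.sphere (0 : EuclideanSpace ℝ (Fin 4)) 1) := by
  classical
  have hGbij : Function.Bijective GQ := by
    constructor
    · rintro ⟨z⟩ ⟨w⟩ hzw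
      have hfw : Fmap z = Fmap w := congrArg Subtype.val hzw
      exact Quot.sound (Fmap_inj hfw)
    · rintro ⟨v, hv⟩
      have hv' : ‖v‖ = 1 := mem_sphere_zero_iff_norm.mp hv
      obtain ⟨z, hz⟩ := Fmap_surj v hv'
      exact ⟨Quot.mk _ z, Subtype.ext hz⟩
  have hGcont : Continuous GQ :=
    continuous_quot_lift _ (continuous_Fmap.subtype_mk _)
  exact ⟨Continuous.homeoOfEquivCompactToT2 (f := Equiv.ofBijective GQ hGbij) hGcont⟩
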